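/- Let S + λT be a real singular n×n pencil, i.e., S, T ∈ ℝ^{n×n} with det(S + λT) identically zero. Then there exist real special orthogonal matrices Q, Z ∈ SO(n) such that QSZ and QTZ are both upper triangular. -/

import Mathlib

open Polynomial Matrix

variable {n : ℕ}

noncomputable def pencilPolyR (S T : Matrix (Fin n) (Fin n) ℝ) :
    Matrix (Fin n) (Fin n) (Polynomial ℝ) :=
  Matrix.of fun i j => C (S i j) + X * C (T i j)

def UpperTriR (M : Matrix (Fin n) (Fin n) ℝ) : Prop :=
  ∀ i j : Fin n, j < i → M i j = 0

namespace SchurAux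

noncomputable def pencilPolyR' {m k : ℕ} (S T : Matrix (Fin m) (Fin k) ℝ) :
    Matrix (Fin m) (Fin k) (Polynomial ℝ) :=
  Matrix.of fun i j => C (S i j) + X * C (T i j)

lemma star_eq_transpose {m : ℕ} (A : Matrix (Fin m) (Fin m) ℝ) : star A = Aᵀ := by
  ext i j
  simp [Matrix.star_apply]

lemma memO_iff {m : ℕ} {A : Matrix (Fin m) (Fin m) ℝ} :
    A ∈ Matrix.orthogonalGroup (Fin m) ℝ ↔ A * Aᵀ = 1 := by
  rw [Matrix.mem_orthogonalGroup_iff]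

lemma memO_iff' {m : ℕ} {A : Matrix (Fin m) (Fin m) ℝ} :
    A ∈ Matrix.orthogonalGroup (Fin m) ℝ ↔ Aᵀ * A = 1 := by
  rw [Matrix.mem_orthogonalGroup_iff']

lemma col_dot {m : ℕ} {A : Matrix (Fin m) (Fin m) ℝ}
    (hA : A ∈ Matrix.orthogonalGroup (Fin m) ℝ) (a b : Fin m) :
    ∑ r, A r a * A r b = if a = b then 1 else 0 := by
  have h := memO_iff'.1 hA
  have := congrFun (congrFun h a) b
  simpa [Matrix.mul_apply, Matrix.transpose_apply, Matrix.one_apply] using this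

/-- Orthogonal matrix with prescribed column. -/
lemma exists_orth_col {m : ℕ} (x : Fin m → ℝ) (hx : ∑ i, x i * x i = 1) (i0 : Fin m) :
    ∃ Z : Matrix (Fin m) (Fin m) ℝ, Z ∈ Matrix.orthogonalGroup (Fin m) ℝ ∧ ∀ i, Z i i0 = x i := by
  classical
  let x' : EuclideanSpace ℝ (Fin m) := WithLp.toLp 2 x
  have hcard : Module.finrank ℝ (EuclideanSpace ℝ (Fin m)) = Fintype.card (Fin m) := by
    simp
  have hv : Orthonormal ℝ (Set.restrict {i0} (fun _ : Fin m => x')) := by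
    rw [orthonormal_iff_ite]
    rintro ⟨i, hi⟩ ⟨j, hj⟩
    rcases hi; rcases hj
    simp only [if_pos rfl, Set.restrict_apply]
    simp only [x', PiLp.inner_apply, RCLike.inner_apply, conj_trivial, WithLp.ofLp_toLp, PiLp.toLp_apply]
    exact (Finset.sum_congr rfl fun i _ => rfl).trans hx
  obtain ⟨b, hb⟩ := hv.exists_orthonormalBasis_extension_of_card_eq hcard
  refine ⟨Matrix.of fun r c => b c r, memO_iff'.2 ?_, fun i => ?_⟩
  · ext a c
    have := b.orthonormal
    rw [orthonormal_iff_ite] at this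
    have h2 := this a c
    simp only [PiLp.inner_apply, RCLike.inner_apply, conj_trivial] at h2
    simpa [Matrix.mul_apply, Matrix.transpose_apply, Matrix.one_apply, mul_comm] using h2
  · have := hb i0 rfl
    simpa [x'] using congrFun (congrArg WithLp.ofLp this) i

/-- Embed a matrix into one dimension higher, with a 1 in the new first slot. -/
def padF {m : ℕ} (P : Matrix (Fin m) (Fin m) ℝ) : Matrix (Fin (m+1)) (Fin (m+1)) ℝ :=
  Matrix.of fun i j =>
    Fin.cases (Fin.cases 1 (fun _ => 0) j) (fun i' => Fin.cases 0 (fun j' => P i' j') j) i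

@[simp] lemma padF_zero_zero {m : ℕ} (P : Matrix (Fin m) (Fin m) ℝ) : padF P 0 0 = 1 := rfl
@[simp] lemma padF_zero_succ {m : ℕ} (P : Matrix (Fin m) (Fin m) ℝ) (j : Fin m) :
    padF P 0 j.succ = 0 := by simp [padF]
@[simp] lemma padF_succ_zero {m : ℕ} (P : Matrix (Fin m) (Fin m) ℝ) (i : Fin m) :
    padF P i.succ 0 = 0 := by simp [padF]
@[simp] lemma padF_succ_succ {m : ℕ} (P : Matrix (Fin m) (Fin m) ℝ) (i j : Fin m) :
    padF P i.succ j.succ = P i j := by simp [padF]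

lemma padF_mul {m : ℕ} (P R : Matrix (Fin m) (Fin m) ℝ) :
    padF P * padF R = padF (P * R) := by
  ext i j
  rw [Matrix.mul_apply, Fin.sum_univ_succ]
  induction i using Fin.cases with
  | zero =>
    induction j using Fin.cases with
    | zero => simp
    | succ j => simp
  | succ i =>
    induction j using Fin.cases with
    | zero => simp
    | succ j => simp [Matrix.mul_apply]

@[simp] lemma padF_transpose {m : ℕ} (P : Matrix (Fin m) (Fin m) ℝ) :
    (padF P)ᵀ = padF Pᵀ := by
  ext i j
  induction i using Fin.cases with
  | zero => induction j using Fin.cases with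
    | zero => rfl
    | succ j => simp
  | succ i => induction j using Fin.cases with
    | zero => simp
    | succ j => simp

@[simp] lemma padF_one {m : ℕ} : padF (1 : Matrix (Fin m) (Fin m) ℝ) = 1 := by
  ext i j
  induction i using Fin.cases with
  | zero => induction j using Fin.cases with
    | zero => simp
    | succ j => simp [Matrix.one_apply, (Fin.succ_ne_zero j).symm]
  | succ i => induction j using Fin.cases with
    | zero => simp [Matrix.one_apply, Fin.succ_ne_zero i]
    | succ j => simp [Matrix.one_apply]

lemma padF_mem {m : ℕ} {P : Matrix (Fin m) (Fin m) ℝ}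
    (hP : P ∈ Matrix.orthogonalGroup (Fin m) ℝ) :
    padF P ∈ Matrix.orthogonalGroup (Fin (m+1)) ℝ := by
  rw [memO_iff] at hP ⊢
  rw [padF_transpose, padF_mul, hP, padF_one]

/-- Embed a matrix into one dimension higher, with a 1 in the new last slot. -/
def padL {m : ℕ} (P : Matrix (Fin m) (Fin m) ℝ) : Matrix (Fin (m+1)) (Fin (m+1)) ℝ :=
  Matrix.of fun i j =>
    Fin.lastCases (Fin.lastCases 1 (fun _ => 0) j) (fun i' => Fin.lastCases 0 (fun j' => P i' j') j) i

@[simp] lemma padL_last_last {m : ℕ} (P : Matrix (Fin m) (Fin m) ℝ) :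
    padL P (Fin.last m) (Fin.last m) = 1 := by simp [padL]
@[simp] lemma padL_last_cast {m : ℕ} (P : Matrix (Fin m) (Fin m) ℝ) (j : Fin m) :
    padL P (Fin.last m) j.castSucc = 0 := by simp [padL]
@[simp] lemma padL_cast_last {m : ℕ} (P : Matrix (Fin m) (Fin m) ℝ) (i : Fin m) :
    padL P i.castSucc (Fin.last m) = 0 := by simp [padL]
@[simp] lemma padL_cast_cast {m : ℕ} (P : Matrix (Fin m) (Fin m) ℝ) (i j : Fin m) :
    padL P i.castSucc j.castSucc = P i j := by simp [padL]

lemma padL_mul {m : ℕ} (P R : Matrix (Fin m) (Fin m) ℝ) :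
    padL P * padL R = padL (P * R) := by
  ext i j
  rw [Matrix.mul_apply, Fin.sum_univ_castSucc]
  induction i using Fin.lastCases with
  | last =>
    induction j using Fin.lastCases with
    | last => simp
    | cast j => simp
  | cast i =>
    induction j using Fin.lastCases with
    | last => simp
    | cast j => simp [Matrix.mul_apply]

@[simp] lemma padL_transpose {m : ℕ} (P : Matrix (Fin m) (Fin m) ℝ) :
    (padL P)ᵀ = padL Pᵀ := by
  ext i j
  induction i using Fin.lastCases with
  | last => induction j using Fin.lastCases with
    | last => simp
    | cast j => simp
  | cast i => induction j using Fin.lastCases with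
    | last => simp
    | cast j => simp

@[simp] lemma padL_one {m : ℕ} : padL (1 : Matrix (Fin m) (Fin m) ℝ) = 1 := by
  ext i j
  induction i using Fin.lastCases with
  | last => induction j using Fin.lastCases with
    | last => simp
    | cast j => simp [Matrix.one_apply, (Fin.castSucc_lt_last j).ne']
  | cast i => induction j using Fin.lastCases with
    | last => simp [Matrix.one_apply, (Fin.castSucc_lt_last i).ne]
    | cast j => simp [Matrix.one_apply, Fin.castSucc_inj]

lemma padL_mem {m : ℕ} {P : Matrix (Fin m) (Fin m) ℝ}
    (hP : P ∈ Matrix.orthogonalGroup (Fin m) ℝ) :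
    padL P ∈ Matrix.orthogonalGroup (Fin (m+1)) ℝ := by
  rw [memO_iff] at hP ⊢
  rw [padL_transpose, padL_mul, hP, padL_one]

/-- Top-degree coefficient slice is nonzero somewhere. -/
lemma exists_coeff_sup_ne_zero {N : ℕ} (v : Fin N → ℝ[X]) (hv : v ≠ 0) :
    ∃ i, (v i).coeff (Finset.univ.sup fun i => (v i).natDegree) ≠ 0 := by
  classical
  obtain ⟨i1, hi1⟩ : ∃ i, v i ≠ 0 := by
    by_contra h
    push_neg at h
    exact hv (funext h)
  set d := Finset.univ.sup fun i => (v i).natDegree with hd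
  obtain ⟨i0, -, hi0⟩ := Finset.exists_mem_eq_sup (Finset.univ : Finset (Fin N))
    ⟨i1, Finset.mem_univ i1⟩ (fun i => (v i).natDegree)
  rcases Nat.eq_zero_or_pos d with h0 | hpos
  · refine ⟨i1, ?_⟩
    rw [h0]
    intro hc
    apply hi1
    have hdeg : (v i1).natDegree = 0 := by
      have : (v i1).natDegree ≤ d :=
        Finset.le_sup (f := fun i => (v i).natDegree) (Finset.mem_univ i1)
      omega
    have := Polynomial.eq_C_of_natDegree_eq_zero hdeg
    rw [this, hc, map_zero]
  · refine ⟨i0, ?_⟩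
    have hne : v i0 ≠ 0 := by
      intro hc
      rw [hd, hi0, hc] at hpos
      simp at hpos
    rw [hd, hi0, Polynomial.coeff_natDegree]
    exact Polynomial.leadingCoeff_ne_zero.2 hne
  
/-- Extract the top coefficient relation from a pencil relation. -/
lemma top_coeff_relation {N : ℕ} (a b : Fin N → ℝ) (v : Fin N → ℝ[X]) (d : ℕ)
    (hd : ∀ i, (v i).natDegree ≤ d)
    (h : ∑ i, (C (a i) + X * C (b i)) * v i = 0) :
    ∑ i, b i * (v i).coeff d = 0 := by
  have h1 := congrArg (fun p => Polynomial.coeff p (d+1)) h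
  simp only [Polynomial.finset_sum_coeff, Polynomial.coeff_zero] at h1
  rw [← h1]
  apply Finset.sum_congr rfl
  intro i _
  have hz : (v i).coeff (d+1) = 0 :=
    Polynomial.coeff_eq_zero_of_natDegree_lt (lt_of_le_of_lt (hd i) (Nat.lt_succ_self d))
  rw [add_mul, Polynomial.coeff_add, mul_assoc, Polynomial.coeff_X_mul,
    Polynomial.coeff_C_mul, Polynomial.coeff_C_mul, hz]
  ring

lemma mul3_apply' {α : Type*} [CommRing α] {m k : ℕ} (P : Matrix (Fin m) (Fin m) α)
    (A : Matrix (Fin m) (Fin k) α) (R : Matrix (Fin k) (Fin k) α) (i : Fin m) (j : Fin k) :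
    (P * A * R) i j = ∑ a, ∑ b, P i a * A a b * R b j := by
  simp only [Matrix.mul_apply, Finset.sum_mul]
  rw [Finset.sum_comm]

lemma pencil_conj {m : ℕ} (Q S T Z : Matrix (Fin m) (Fin m) ℝ) :
    pencilPolyR' (Q * S * Z) (Q * T * Z) =
      (Q.map C) * pencilPolyR' S T * (Z.map C) := by
  refine Matrix.ext fun i j => ?_
  rw [mul3_apply']
  simp only [pencilPolyR', Matrix.of_apply, Matrix.map_apply, mul3_apply', map_sum, _root_.map_mul,
    Finset.mul_sum, Finset.sum_mul]
  rw [← Finset.sum_add_distrib]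
  apply Finset.sum_congr rfl
  intro a _
  rw [← Finset.sum_add_distrib]
  apply Finset.sum_congr rfl
  intro b _
  ring

lemma pencil_conj_det {m : ℕ} (Q S T Z : Matrix (Fin m) (Fin m) ℝ) :
    (pencilPolyR' (Q * S * Z) (Q * T * Z)).det =
      C (Q.det * Z.det) * (pencilPolyR' S T).det := by
  rw [pencil_conj, Matrix.det_mul, Matrix.det_mul]
  have hQ : (Q.map C).det = C Q.det := ((C : ℝ →+* ℝ[X]).map_det Q).symm
  have hZ : (Z.map C).det = C Z.det := ((C : ℝ →+* ℝ[X]).map_det Z).symm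
  rw [hQ, hZ, _root_.map_mul]
  ring

/-- Column expansion when the first columns are α·e₀ and 0. -/
lemma pencil_det_first_col {n : ℕ} (M N : Matrix (Fin (n+1)) (Fin (n+1)) ℝ) (α : ℝ)
    (hM : ∀ i, M i 0 = if i = 0 then α else 0) (hN : ∀ i, N i 0 = 0) :
    (pencilPolyR' M N).det =
      C α * (pencilPolyR' (M.submatrix Fin.succ Fin.succ) (N.submatrix Fin.succ Fin.succ)).det := by
  rw [Matrix.det_succ_column_zero]
  rw [Finset.sum_eq_single (0 : Fin (n+1))]
  · have hsub : (pencilPolyR' M N).submatrix (Fin.succAbove 0) Fin.succ =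
        pencilPolyR' (M.submatrix Fin.succ Fin.succ) (N.submatrix Fin.succ Fin.succ) := by
      ext a b
      simp [pencilPolyR', Fin.succAbove_zero]
    rw [hsub]
    simp [pencilPolyR', hM 0, hN 0]
  · intro i _ hi
    have : (pencilPolyR' M N) i 0 = 0 := by
      simp [pencilPolyR', hM i, hN i, hi]
    rw [this]
    ring
  · intro h
    exact absurd (Finset.mem_univ _) h

variable {m : ℕ}

lemma transpose_mem {A : Matrix (Fin m) (Fin m) ℝ}
    (hA : A ∈ Matrix.orthogonalGroup (Fin m) ℝ) :
    Aᵀ ∈ Matrix.orthogonalGroup (Fin m) ℝ := by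
  rw [memO_iff, Matrix.transpose_transpose]
  exact memO_iff'.1 hA

lemma one_memO : (1 : Matrix (Fin m) (Fin m) ℝ) ∈ Matrix.orthogonalGroup (Fin m) ℝ := by
  rw [memO_iff]; simp

lemma normalize_vec (x : Fin m → ℝ) (hx : x ≠ 0) :
    ∃ r : ℝ, 0 < r ∧ ∑ i, (x i / r) * (x i / r) = 1 := by
  obtain ⟨i0, hi0⟩ : ∃ i, x i ≠ 0 := by
    by_contra h; push_neg at h; exact hx (funext h)
  set s := ∑ i, x i * x i with hs
  have hspos : 0 < s := by
    have h1 : ∀ i ∈ Finset.univ, (0:ℝ) ≤ x i * x i := fun i _ => mul_self_nonneg _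
    have h2 : x i0 * x i0 ≤ s := Finset.single_le_sum h1 (Finset.mem_univ i0)
    have := mul_self_pos.2 hi0
    linarith
  refine ⟨Real.sqrt s, Real.sqrt_pos.2 hspos, ?_⟩
  have hrr : Real.sqrt s * Real.sqrt s = s := Real.mul_self_sqrt hspos.le
  have : ∑ i, (x i / Real.sqrt s) * (x i / Real.sqrt s)
      = (∑ i, x i * x i) / (Real.sqrt s * Real.sqrt s) := by
    rw [Finset.sum_div]
    apply Finset.sum_congr rfl
    intro i _
    ring
  rw [this, hrr, ← hs, div_self hspos.ne']

lemma mul3_apply {m k : ℕ} (P : Matrix (Fin m) (Fin m) ℝ) (A : Matrix (Fin m) (Fin k) ℝ)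
    (R : Matrix (Fin k) (Fin k) ℝ) (i : Fin m) (j : Fin k) :
    (P * A * R) i j = ∑ a, ∑ b, P i a * A a b * R b j := by
  simp only [Matrix.mul_apply, Finset.sum_mul]
  rw [Finset.sum_comm]

lemma sandwichL_cast {m k : ℕ} (Q₁ : Matrix (Fin m) (Fin m) ℝ)
    (M : Matrix (Fin (m+1)) (Fin (k+1)) ℝ) (Z₁ : Matrix (Fin k) (Fin k) ℝ)
    (i : Fin m) (j : Fin k) :
    (padL Q₁ * M * padL Z₁) i.castSucc j.castSucc =
      (Q₁ * (M.submatrix Fin.castSucc Fin.castSucc) * Z₁) i j := by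
  rw [mul3_apply, mul3_apply]
  rw [Fin.sum_univ_castSucc]
  simp only [padL_cast_last, zero_mul, mul_zero, Finset.sum_const_zero, add_zero]
  apply Finset.sum_congr rfl
  intro a _
  rw [Fin.sum_univ_castSucc]
  simp [Matrix.submatrix_apply]

lemma sandwichL_last {m k : ℕ} (Q₁ : Matrix (Fin m) (Fin m) ℝ)
    (M : Matrix (Fin (m+1)) (Fin (k+1)) ℝ) (Z₁ : Matrix (Fin k) (Fin k) ℝ) (j : Fin k) :
    (padL Q₁ * M * padL Z₁) (Fin.last m) j.castSucc =
      ∑ b, M (Fin.last m) b.castSucc * Z₁ b j := by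
  rw [mul3_apply]
  rw [Fin.sum_univ_castSucc]
  have h1 : ∀ a : Fin m, ∑ b, padL Q₁ (Fin.last m) a.castSucc * M a.castSucc b * padL Z₁ b j.castSucc = 0 := by
    intro a
    simp
  rw [Finset.sum_congr rfl (fun a _ => h1 a), Finset.sum_const_zero, zero_add]
  rw [Fin.sum_univ_castSucc]
  simp

/-- Any strictly tall real pencil can be brought to staircase-triangular form by
orthogonal transformations. -/
lemma tall_lemma : ∀ (k m : ℕ), k < m → ∀ (A B : Matrix (Fin m) (Fin k) ℝ),
    ∃ Q Z, Q ∈ Matrix.orthogonalGroup (Fin m) ℝ ∧ Z ∈ Matrix.orthogonalGroup (Fin k) ℝ ∧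
      ∀ (i : Fin m) (j : Fin k), (j : ℕ) + (m - k) < (i : ℕ) →
        (Q * A * Z) i j = 0 ∧ (Q * B * Z) i j = 0 := by
  intro k
  induction k with
  | zero => exact fun m _ A B => ⟨1, 1, one_memO, one_memO, fun i j => j.elim0⟩
  | succ k IH =>
    intro m hm A B
    obtain ⟨m₀, rfl⟩ : ∃ m₀, m = m₀ + 1 := ⟨m - 1, by omega⟩
    have hkm : k < m₀ := by omega
    classical
    -- pad to a square singular pencil
    set A' : Matrix (Fin (m₀+1)) (Fin (m₀+1)) ℝ :=
      Matrix.of fun i j => if h : (j:ℕ) < k+1 then A i ⟨j, h⟩ else 0 with hA'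
    set B' : Matrix (Fin (m₀+1)) (Fin (m₀+1)) ℝ :=
      Matrix.of fun i j => if h : (j:ℕ) < k+1 then B i ⟨j, h⟩ else 0 with hB'
    have hdet : (pencilPolyR' A' B').det = 0 := by
      apply Matrix.det_eq_zero_of_column_eq_zero ⟨k+1, by omega⟩
      intro i
      simp [pencilPolyR', hA', hB']
    obtain ⟨u, hu0, hu⟩ := Matrix.exists_vecMul_eq_zero_iff.2 hdet
    set d := Finset.univ.sup fun i => (u i).natDegree with hdd
    set x : Fin (m₀+1) → ℝ := fun i => (u i).coeff d with hx
    have hxne : x ≠ 0 := by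
      obtain ⟨i, hi⟩ := exists_coeff_sup_ne_zero u hu0
      intro h
      exact hi (congrFun h i)
    have hdle : ∀ i, (u i).natDegree ≤ d :=
      fun i => Finset.le_sup (f := fun i => (u i).natDegree) (Finset.mem_univ i)
    have hxB : ∀ j : Fin (k+1), ∑ i, x i * B i j = 0 := by
      intro j
      have hcol := congrFun hu ⟨(j:ℕ), by omega⟩
      simp only [Matrix.vecMul, dotProduct, Pi.zero_apply] at hcol
      have hrel : ∑ i, (C (A i j) + X * C (B i j)) * u i = 0 := by
        rw [← hcol]
        apply Finset.sum_congr rfl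
        intro i _
        have h1 : A' i ⟨(j:ℕ), by omega⟩ = A i j := by
          rw [hA', Matrix.of_apply, dif_pos j.isLt]
        have h2 : B' i ⟨(j:ℕ), by omega⟩ = B i j := by
          rw [hB', Matrix.of_apply, dif_pos j.isLt]
        rw [mul_comm]
        simp [pencilPolyR', h1, h2]
      have := top_coeff_relation (fun i => A i j) (fun i => B i j) u d hdle hrel
      rw [← this]
      apply Finset.sum_congr rfl
      intro i _
      rw [mul_comm]
    obtain ⟨r, hr, hxx⟩ := normalize_vec x hxne
    set xh : Fin (m₀+1) → ℝ := fun i => x i / r with hxh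
    obtain ⟨P₁, hP₁, hP₁c⟩ := exists_orth_col xh hxx (Fin.last m₀)
    set Q₀ := P₁ᵀ with hQ₀
    have hQ₀mem := transpose_mem hP₁
    set w : Fin (k+1) → ℝ := fun j => ∑ i, xh i * A i j with hw
    have hBrow : ∀ j, ∑ i, xh i * B i j = 0 := by
      intro j
      have : ∑ i, xh i * B i j = (∑ i, x i * B i j) / r := by
        rw [Finset.sum_div]
        apply Finset.sum_congr rfl
        intro i _
        rw [hxh]
        ring
      rw [this, hxB, zero_div]
    have hZ₂ : ∃ Z₂ ∈ Matrix.orthogonalGroup (Fin (k+1)) ℝ,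
        ∀ j : Fin (k+1), j ≠ Fin.last k → ∑ c, w c * Z₂ c j = 0 := by
      by_cases hwz : w = 0
      · refine ⟨1, one_memO, fun j _ => ?_⟩
        simp [hwz]
      · obtain ⟨rw', hrw, hww⟩ := normalize_vec w hwz
        obtain ⟨P₂, hP₂, hP₂c⟩ := exists_orth_col (fun c => w c / rw') hww (Fin.last k)
        refine ⟨P₂, hP₂, fun j hj => ?_⟩
        have h1 : ∑ c, w c * P₂ c j = rw' * ∑ c, (w c / rw') * P₂ c j := by
          rw [Finset.mul_sum]
          apply Finset.sum_congr rfl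
          intro c _
          field_simp
        have h2 : ∑ c, (w c / rw') * P₂ c j = 0 := by
          have := col_dot hP₂ (Fin.last k) j
          rw [if_neg (fun h => hj h.symm)] at this
          rw [← this]
          apply Finset.sum_congr rfl
          intro c _
          rw [hP₂c c]
        rw [h1, h2, mul_zero]
    obtain ⟨Z₂, hZ₂mem, hZ₂w⟩ := hZ₂
    set M := Q₀ * A * Z₂ with hM
    set NN := Q₀ * B * Z₂ with hNN
    have hQ₀row : ∀ c, (Q₀ * A) (Fin.last m₀) c = w c := by
      intro c
      rw [Matrix.mul_apply, hw]
      apply Finset.sum_congr rfl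
      intro i _
      rw [hQ₀, Matrix.transpose_apply, hP₁c i]
    have hQ₀Brow : ∀ c, (Q₀ * B) (Fin.last m₀) c = 0 := by
      intro c
      rw [Matrix.mul_apply, ← hBrow c]
      apply Finset.sum_congr rfl
      intro i _
      rw [hQ₀, Matrix.transpose_apply, hP₁c i]
    have hMlast : ∀ j, j ≠ Fin.last k → M (Fin.last m₀) j = 0 := by
      intro j hj
      rw [hM, Matrix.mul_apply]
      rw [← hZ₂w j hj]
      apply Finset.sum_congr rfl
      intro c _
      rw [hQ₀row c]
    have hNlast : ∀ j, NN (Fin.last m₀) j = 0 := by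
      intro j
      rw [hNN, Matrix.mul_apply]
      apply Finset.sum_eq_zero
      intro c _
      rw [hQ₀Brow c, zero_mul]
    obtain ⟨Q₁, Z₁, hQ₁, hZ₁, hIH⟩ := IH m₀ hkm
      (M.submatrix Fin.castSucc Fin.castSucc) (NN.submatrix Fin.castSucc Fin.castSucc)
    refine ⟨padL Q₁ * Q₀, Z₂ * padL Z₁, mul_mem (padL_mem hQ₁) hQ₀mem,
      mul_mem hZ₂mem (padL_mem hZ₁), ?_⟩
    intro i j hij
    have hjk : (j : ℕ) < k := by
      have hi := i.isLt
      omega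
    obtain ⟨j', rfl⟩ : ∃ j' : Fin k, j = j'.castSucc := by
      refine ⟨⟨(j:ℕ), hjk⟩, ?_⟩
      ext
      simp
    have hAr : padL Q₁ * Q₀ * A * (Z₂ * padL Z₁) = padL Q₁ * M * padL Z₁ := by
      rw [hM]
      simp only [Matrix.mul_assoc]
    have hBr : padL Q₁ * Q₀ * B * (Z₂ * padL Z₁) = padL Q₁ * NN * padL Z₁ := by
      rw [hNN]
      simp only [Matrix.mul_assoc]
    rw [hAr, hBr]
    induction i using Fin.lastCases with
    | last =>
      constructor
      · rw [sandwichL_last]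
        apply Finset.sum_eq_zero
        intro b _
        rw [hMlast b.castSucc (Fin.ne_last_of_lt (Fin.castSucc_lt_last b)), zero_mul]
      · rw [sandwichL_last]
        apply Finset.sum_eq_zero
        intro b _
        rw [hNlast b.castSucc, zero_mul]
    | cast i' =>
      rw [sandwichL_cast, sandwichL_cast]
      apply hIH
      simp only [Fin.coe_castSucc] at hij ⊢
      omega
  

lemma sandwichF_zero {n : ℕ} (P M : Matrix (Fin (n+1)) (Fin (n+1)) ℝ)
    (Z₁ : Matrix (Fin n) (Fin n) ℝ) (i : Fin (n+1)) :
    (P * M * padF Z₁) i 0 = (P * M) i 0 := by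
  rw [Matrix.mul_apply, Fin.sum_univ_succ]
  simp

lemma sandwichF_succ {n : ℕ} (P M : Matrix (Fin (n+1)) (Fin (n+1)) ℝ)
    (Z₁ : Matrix (Fin n) (Fin n) ℝ) (i : Fin (n+1)) (j : Fin n) :
    (P * M * padF Z₁) i j.succ = (P * (M.submatrix id Fin.succ) * Z₁) i j := by
  rw [Matrix.mul_apply (M := P * M), Fin.sum_univ_succ]
  simp only [padF_zero_succ, mul_zero, zero_add, padF_succ_succ]
  rw [Matrix.mul_apply (M := P * M.submatrix id Fin.succ)]
  apply Finset.sum_congr rfl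
  intro b _
  have h1 : (P * M) i b.succ = (P * M.submatrix id Fin.succ) i b := by
    rw [Matrix.mul_apply, Matrix.mul_apply]
    apply Finset.sum_congr rfl
    intro a _
    simp
  rw [h1]

lemma sandwichF_succ_succ {n : ℕ} (Q₁ : Matrix (Fin n) (Fin n) ℝ)
    (M : Matrix (Fin (n+1)) (Fin (n+1)) ℝ) (Z₁ : Matrix (Fin n) (Fin n) ℝ)
    (i j : Fin n) :
    (padF Q₁ * M * padF Z₁) i.succ j.succ =
      (Q₁ * (M.submatrix Fin.succ Fin.succ) * Z₁) i j := by
  rw [mul3_apply, mul3_apply]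
  rw [Fin.sum_univ_succ]
  simp only [padF_succ_zero, zero_mul, Finset.sum_const_zero, zero_add]
  apply Finset.sum_congr rfl
  intro a _
  rw [Fin.sum_univ_succ]
  simp [Matrix.submatrix_apply]

/-- The main square induction: singular square pencils triangularize orthogonally. -/
lemma square_lemma : ∀ (n : ℕ) (S T : Matrix (Fin n) (Fin n) ℝ),
    (pencilPolyR' S T).det = 0 →
    ∃ Q Z, Q ∈ Matrix.orthogonalGroup (Fin n) ℝ ∧ Z ∈ Matrix.orthogonalGroup (Fin n) ℝ ∧
      ∀ i j : Fin n, (j : ℕ) < (i : ℕ) → (Q * S * Z) i j = 0 ∧ (Q * T * Z) i j = 0 := by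
  intro n
  induction n with
  | zero =>
    intro S T hsing
    exact ⟨1, 1, one_memO, one_memO, fun i j => i.elim0⟩
  | succ n IH =>
    intro S T hsing
    classical
    obtain ⟨v, hv0, hv⟩ := Matrix.exists_mulVec_eq_zero_iff.2 hsing
    set d := Finset.univ.sup fun i => (v i).natDegree with hdd
    set x : Fin (n+1) → ℝ := fun i => (v i).coeff d with hx
    have hxne : x ≠ 0 := by
      obtain ⟨i, hi⟩ := exists_coeff_sup_ne_zero v hv0
      intro h
      exact hi (congrFun h i)
    have hdle : ∀ i, (v i).natDegree ≤ d :=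
      fun i => Finset.le_sup (f := fun i => (v i).natDegree) (Finset.mem_univ i)
    have hTx : ∀ jr : Fin (n+1), ∑ i, T jr i * x i = 0 := by
      intro jr
      have hrow := congrFun hv jr
      simp only [Matrix.mulVec, dotProduct, Pi.zero_apply] at hrow
      have hrel : ∑ i, (C (S jr i) + X * C (T jr i)) * v i = 0 := by
        rw [← hrow]
        apply Finset.sum_congr rfl
        intro i _
        simp [pencilPolyR']
      exact top_coeff_relation (fun i => S jr i) (fun i => T jr i) v d hdle hrel
    obtain ⟨r, hr, hxx⟩ := normalize_vec x hxne
    set xh : Fin (n+1) → ℝ := fun i => x i / r with hxh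
    obtain ⟨Z₀, hZ₀mem, hZ₀c⟩ := exists_orth_col xh hxx 0
    set y : Fin (n+1) → ℝ := fun i => ∑ c, S i c * xh c with hy
    have hSZcol : ∀ i, (S * Z₀) i 0 = y i := by
      intro i
      rw [Matrix.mul_apply, hy]
      apply Finset.sum_congr rfl
      intro c _
      rw [hZ₀c c]
    have hTZcol : ∀ i, (T * Z₀) i 0 = 0 := by
      intro i
      rw [Matrix.mul_apply]
      have : ∑ c, T i c * Z₀ c 0 = (∑ c, T i c * x c) / r := by
        rw [Finset.sum_div]
        apply Finset.sum_congr rfl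
        intro c _
        rw [hZ₀c c, hxh]
        ring
      rw [this, hTx i, zero_div]
    by_cases hyz : y = 0
    · -- common kernel vector: use the tall lemma on the remaining n+1 by n pencil
      obtain ⟨Q, Z₁, hQmem, hZ₁mem, hcond⟩ := tall_lemma n (n+1) (Nat.lt_succ_self n)
        ((S * Z₀).submatrix id Fin.succ) ((T * Z₀).submatrix id Fin.succ)
      refine ⟨Q, Z₀ * padF Z₁, hQmem, mul_mem hZ₀mem (padF_mem hZ₁mem), ?_⟩
      intro i j hij
      have hQA : Q * S * (Z₀ * padF Z₁) = Q * (S * Z₀) * padF Z₁ := by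
        simp only [Matrix.mul_assoc]
      have hQB : Q * T * (Z₀ * padF Z₁) = Q * (T * Z₀) * padF Z₁ := by
        simp only [Matrix.mul_assoc]
      rw [hQA, hQB]
      rcases Fin.eq_zero_or_eq_succ j with rfl | ⟨j', rfl⟩
      · constructor
        · rw [sandwichF_zero, Matrix.mul_apply]
          apply Finset.sum_eq_zero
          intro a _
          rw [hSZcol a]
          have hza : y a = 0 := by rw [hyz]; rfl
          rw [hza, mul_zero]
        · rw [sandwichF_zero, Matrix.mul_apply]
          apply Finset.sum_eq_zero
          intro a _
          rw [hTZcol a, mul_zero]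
      · rw [sandwichF_succ, sandwichF_succ]
        apply hcond
        simp only [Fin.val_succ] at hij
        omega
    · -- deflate with a nonzero first column
      obtain ⟨ry, hry, hyy⟩ := normalize_vec y hyz
      obtain ⟨P₂, hP₂mem, hP₂c⟩ := exists_orth_col (fun i => y i / ry) hyy 0
      set Q₀ := P₂ᵀ with hQ₀
      have hQ₀mem := transpose_mem hP₂mem
      set M := Q₀ * S * Z₀ with hM
      set NN := Q₀ * T * Z₀ with hNN
      have hMcol : ∀ i, M i 0 = if i = 0 then ry else 0 := by
        intro i
        have h1 : M i 0 = ∑ a, Q₀ i a * (S * Z₀) a 0 := by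
          rw [hM, Matrix.mul_assoc, Matrix.mul_apply]
        rw [h1]
        have h2 : ∀ a, Q₀ i a * (S * Z₀) a 0 = ry * (P₂ a i * P₂ a 0) := by
          intro a
          rw [hQ₀, Matrix.transpose_apply, hSZcol a, hP₂c a]
          field_simp
        rw [Finset.sum_congr rfl (fun a _ => h2 a), ← Finset.mul_sum, col_dot hP₂mem i 0]
        by_cases h : i = 0 <;> simp [h]
      have hNcol : ∀ i, NN i 0 = 0 := by
        intro i
        have h1 : NN i 0 = ∑ a, Q₀ i a * (T * Z₀) a 0 := by
          rw [hNN, Matrix.mul_assoc, Matrix.mul_apply]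
        rw [h1]
        apply Finset.sum_eq_zero
        intro a _
        rw [hTZcol a, mul_zero]
      have hdetMN : (pencilPolyR' M NN).det = 0 := by
        rw [hM, hNN, pencil_conj_det, hsing, mul_zero]
      have hdetsub : (pencilPolyR' (M.submatrix Fin.succ Fin.succ)
          (NN.submatrix Fin.succ Fin.succ)).det = 0 := by
        rw [pencil_det_first_col M NN ry hMcol hNcol] at hdetMN
        rcases mul_eq_zero.1 hdetMN with h | h
        · exact absurd h (Polynomial.C_ne_zero.mpr hry.ne')
        · exact h
      obtain ⟨Q₁, Z₁, hQ₁mem, hZ₁mem, hUT⟩ := IH (M.submatrix Fin.succ Fin.succ)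
        (NN.submatrix Fin.succ Fin.succ) hdetsub
      refine ⟨padF Q₁ * Q₀, Z₀ * padF Z₁, mul_mem (padF_mem hQ₁mem) hQ₀mem,
        mul_mem hZ₀mem (padF_mem hZ₁mem), ?_⟩
      intro i j hij
      have hQS : padF Q₁ * Q₀ * S * (Z₀ * padF Z₁) = padF Q₁ * M * padF Z₁ := by
        rw [hM]
        simp only [Matrix.mul_assoc]
      have hQT : padF Q₁ * Q₀ * T * (Z₀ * padF Z₁) = padF Q₁ * NN * padF Z₁ := by
        rw [hNN]
        simp only [Matrix.mul_assoc]
      rw [hQS, hQT]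
      rcases Fin.eq_zero_or_eq_succ i with rfl | ⟨i', rfl⟩
      · exact absurd hij (by simp)
      rcases Fin.eq_zero_or_eq_succ j with rfl | ⟨j', rfl⟩
      · constructor
        · rw [sandwichF_zero, Matrix.mul_apply, Fin.sum_univ_succ]
          simp only [padF_succ_zero, zero_mul, zero_add]
          apply Finset.sum_eq_zero
          intro a _
          rw [hMcol a.succ, if_neg (Fin.succ_ne_zero a), mul_zero]
        · rw [sandwichF_zero, Matrix.mul_apply]
          apply Finset.sum_eq_zero
          intro a _
          rw [hNcol a, mul_zero]
      · rw [sandwichF_succ_succ, sandwichF_succ_succ]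
        apply hUT
        simp only [Fin.val_succ] at hij
        omega
  

lemma det_sq_one {m : ℕ} {A : Matrix (Fin m) (Fin m) ℝ}
    (hA : A ∈ Matrix.orthogonalGroup (Fin m) ℝ) : A.det * A.det = 1 := by
  have h := memO_iff.1 hA
  have := congrArg Matrix.det h
  rwa [Matrix.det_mul, Matrix.det_transpose, Matrix.det_one] at this


end SchurAux

open SchurAux in
/-- Every real singular pencil admits a real upper triangular generalized Schur form via
special orthogonal transformations. -/
theorem real_singular_pencil_schur_form (S T : Matrix (Fin n) (Fin n) ℝ)
    (hsing : (pencilPolyR S T).det = 0) :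
    ∃ Q Z : Matrix (Fin n) (Fin n) ℝ,
      Q ∈ Matrix.orthogonalGroup (Fin n) ℝ ∧ Z ∈ Matrix.orthogonalGroup (Fin n) ℝ ∧
      Q.det = 1 ∧ Z.det = 1 ∧
      UpperTriR (Q * S * Z) ∧ UpperTriR (Q * T * Z) := by
  classical
  rcases n with _ | n₀
  · refine ⟨1, 1, one_memO, one_memO, Matrix.det_one, Matrix.det_one, ?_, ?_⟩ <;>
      exact fun i j _ => i.elim0
  obtain ⟨Q, Z, hQmem, hZmem, hUT⟩ := square_lemma (n₀+1) S T hsing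
  set uQ : Fin (n₀+1) → ℝ := fun i => if i = 0 then Q.det else 1 with huQ
  set uZ : Fin (n₀+1) → ℝ := fun i => if i = 0 then Z.det else 1 with huZ
  have hQsq := det_sq_one hQmem
  have hZsq := det_sq_one hZmem
  have huQsq : ∀ i, uQ i * uQ i = 1 := by
    intro i
    by_cases h : i = 0 <;> simp [huQ, h, hQsq]
  have huZsq : ∀ i, uZ i * uZ i = 1 := by
    intro i
    by_cases h : i = 0 <;> simp [huZ, h, hZsq]
  have hDQmem : Matrix.diagonal uQ ∈ Matrix.orthogonalGroup (Fin (n₀+1)) ℝ := by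
    rw [memO_iff, Matrix.diagonal_transpose, Matrix.diagonal_mul_diagonal]
    rw [show (fun i => uQ i * uQ i) = fun _ => (1:ℝ) from funext fun i => huQsq i]
    exact Matrix.diagonal_one
  have hDZmem : Matrix.diagonal uZ ∈ Matrix.orthogonalGroup (Fin (n₀+1)) ℝ := by
    rw [memO_iff, Matrix.diagonal_transpose, Matrix.diagonal_mul_diagonal]
    rw [show (fun i => uZ i * uZ i) = fun _ => (1:ℝ) from funext fun i => huZsq i]
    exact Matrix.diagonal_one
  have hprodQ : (Matrix.diagonal uQ).det = Q.det := by
    rw [Matrix.det_diagonal, huQ]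
    simp [Finset.prod_ite_eq']
  have hprodZ : (Matrix.diagonal uZ).det = Z.det := by
    rw [Matrix.det_diagonal, huZ]
    simp [Finset.prod_ite_eq']
  refine ⟨Matrix.diagonal uQ * Q, Z * Matrix.diagonal uZ,
    mul_mem hDQmem hQmem, mul_mem hZmem hDZmem, ?_, ?_, ?_, ?_⟩
  · rw [Matrix.det_mul, hprodQ, hQsq]
  · rw [Matrix.det_mul, hprodZ, hZsq]
  · intro i j hij
    have h1 : Matrix.diagonal uQ * Q * S * (Z * Matrix.diagonal uZ)
        = Matrix.diagonal uQ * (Q * S * Z) * Matrix.diagonal uZ := by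
      simp only [Matrix.mul_assoc]
    rw [h1, Matrix.mul_diagonal, Matrix.diagonal_mul, (hUT i j hij).1, mul_zero, zero_mul]
  · intro i j hij
    have h1 : Matrix.diagonal uQ * Q * T * (Z * Matrix.diagonal uZ)
        = Matrix.diagonal uQ * (Q * T * Z) * Matrix.diagonal uZ := by
      simp only [Matrix.mul_assoc]
    rw [h1, Matrix.mul_diagonal, Matrix.diagonal_mul, (hUT i j hij).2, mul_zero, zero_mul]
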